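/- arXiv:math/9906139 — 3 statements merged into one kernel-verified Lean document; each statement's English description precedes it below -/
import Mathlib

section
/- Every 'direct sum system' with connected non-orthogonality graph is transverse: let V = L₁ ⊕ … ⊕ L_k be an internal direct sum of subspaces of a finite-dimensional real inner product space V. Then for every subset I ⊊ {1,…,k} there exists j₀ ∈ {1,…,k} \ I with P_{E⁺}(L_{j₀}^⊥) = E⁺, where E⁺ = span{Lᵢ : i ∈ I}. -/
/-- Every "direct sum system" is transverse: if `V = L₁ ⊕ … ⊕ L_k` is an internal
(not necessarily orthogonal) direct sum, then for every proper index subset `I` there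
is `j₀ ∉ I` such that the orthogonal projection of `(L j₀)ᗮ` onto
`E⁺ = span {L i : i ∈ I}` is all of `E⁺`. -/
theorem directSum_system_transverse
    {V : Type*} [NormedAddCommGroup V] [InnerProductSpace ℝ V] [FiniteDimensional ℝ V]
    {k : ℕ} (L : Fin k → Submodule ℝ V) (hdirect : DirectSum.IsInternal L) :
    ∀ I : Finset (Fin k), I ≠ Finset.univ →
      ∃ j₀ : Fin k, j₀ ∉ I ∧
        Submodule.map (Submodule.orthogonalProjection (⨆ i ∈ I, L i)).toLinearMap (L j₀)ᗮ = ⊤ := by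
  intro I hI
  obtain ⟨j₀, hj₀⟩ : ∃ j₀ : Fin k, j₀ ∉ I := by
    by_contra h
    push_neg at h
    exact hI (Finset.eq_univ_iff_forall.mpr h)
  refine ⟨j₀, hj₀, ?_⟩
  set E : Submodule ℝ V := ⨆ i ∈ I, L i with hE
  have hindep := hdirect.submodule_iSupIndep
  have hdisj : Disjoint (L j₀) E := by
    refine Disjoint.mono_right ?_ (hindep j₀)
    refine iSup₂_le fun i hi => ?_
    exact le_iSup₂ (f := fun j (_ : j ≠ j₀) => L j) i (fun h => hj₀ (h ▸ hi))
  have hinf : L j₀ ⊓ E = ⊥ := disjoint_iff.mp hdisj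
  have hsup : (L j₀)ᗮ ⊔ Eᗮ = ⊤ := by
    have h1 : ((L j₀)ᗮ ⊔ Eᗮ)ᗮ = ⊥ := by
      rw [← Submodule.inf_orthogonal, Submodule.orthogonal_orthogonal,
        Submodule.orthogonal_orthogonal, hinf]
    calc (L j₀)ᗮ ⊔ Eᗮ = ((L j₀)ᗮ ⊔ Eᗮ)ᗮᗮ := (Submodule.orthogonal_orthogonal _).symm
      _ = (⊥ : Submodule ℝ V)ᗮ := by rw [h1]
      _ = ⊤ := Submodule.bot_orthogonal_eq_top
  rw [Submodule.eq_top_iff']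
  rintro ⟨x, hx⟩
  have hxV : x ∈ (L j₀)ᗮ ⊔ Eᗮ := hsup ▸ Submodule.mem_top
  obtain ⟨w, hw, z, hz, hwz⟩ := Submodule.mem_sup.mp hxV
  refine Submodule.mem_map.mpr ⟨w, hw, ?_⟩
  have hPz : Submodule.orthogonalProjection E z = 0 :=
    Submodule.orthogonalProjectionOnto_apply_of_mem_orthogonal hz
  have hPx : Submodule.orthogonalProjection E x = ⟨x, hx⟩ :=
    Submodule.orthogonalProjectionOnto_mem_subspace_eq_self ⟨x, hx⟩
  have : Submodule.orthogonalProjection E w = Submodule.orthogonalProjection E x - Submodule.orthogonalProjection E z := by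
    rw [← map_sub]
    congr 1
    rw [← hwz]; abel
  simpa [hPz, hPx] using this
end

section
/- In the hard ball velocity space 𝓩 = {(v₁,…,v_N) ∈ (ℝ^ν)^N : Σᵢ mᵢvᵢ = 0} with the mass inner product, the span of the base spaces L_{i,j} over the edge set I of a graph G on vertices {1,…,N} equals all of 𝓩 if and only if G is connected. -/
/-- The velocity space `𝓩 = {v : ∑ mᵢ • vᵢ = 0}` of a hard ball system. -/
noncomputable def massZ (N ν : ℕ) (m : Fin N → ℝ) :
    Submodule ℝ (Fin N → EuclideanSpace ℝ (Fin ν)) :=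
  LinearMap.ker (∑ l : Fin N, m l •
    (LinearMap.proj l : (Fin N → EuclideanSpace ℝ (Fin ν)) →ₗ[ℝ] EuclideanSpace ℝ (Fin ν)))

/-- The base space `L_{i,j} = {v : v_k = 0 for k ∉ {i,j}, mᵢ • vᵢ + m_j • v_j = 0}`. -/
noncomputable def baseSpace (N ν : ℕ) (m : Fin N → ℝ) (i j : Fin N) :
    Submodule ℝ (Fin N → EuclideanSpace ℝ (Fin ν)) :=
  (⨅ k ∈ ({i, j} : Set (Fin N))ᶜ,
      LinearMap.ker (LinearMap.proj (R := ℝ)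
        (φ := fun _ : Fin N => EuclideanSpace ℝ (Fin ν)) k)) ⊓
  LinearMap.ker (m i • LinearMap.proj i + m j • LinearMap.proj j :
    (Fin N → EuclideanSpace ℝ (Fin ν)) →ₗ[ℝ] EuclideanSpace ℝ (Fin ν))

section Aux

variable {N ν : ℕ} {m : Fin N → ℝ}

lemma mem_massZ_iff {v : Fin N → EuclideanSpace ℝ (Fin ν)} :
    v ∈ massZ N ν m ↔ ∑ l, m l • v l = 0 := by
  simp [massZ, LinearMap.mem_ker, LinearMap.sum_apply]

lemma mem_baseSpace_iff {i j : Fin N} {v : Fin N → EuclideanSpace ℝ (Fin ν)} :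
    v ∈ baseSpace N ν m i j ↔
      (∀ k, k ≠ i → k ≠ j → v k = 0) ∧ m i • v i + m j • v j = 0 := by
  simp [baseSpace, Submodule.mem_inf, Submodule.mem_iInf, LinearMap.mem_ker]

lemma sum_smul_eq_pair (c : Fin N → ℝ) {i j : Fin N} (hij : i ≠ j)
    {v : Fin N → EuclideanSpace ℝ (Fin ν)} (hv : ∀ k, k ≠ i → k ≠ j → v k = 0) :
    ∑ k, c k • v k = c i • v i + c j • v j := by
  have hp := Finset.sum_pair (f := fun k => c k • v k) hij
  rw [← hp]
  refine (Finset.sum_subset (Finset.subset_univ _) ?_).symm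
  intro k _ hk
  simp only [Finset.mem_insert, Finset.mem_singleton, not_or] at hk
  rw [hv k hk.1 hk.2, smul_zero]

/-- The basic vector supported at `i` and `j`. -/
noncomputable def dvec (m : Fin N → ℝ) (i j : Fin N) (w : EuclideanSpace ℝ (Fin ν)) :
    Fin N → EuclideanSpace ℝ (Fin ν) :=
  Pi.single i ((m i)⁻¹ • w) - Pi.single j ((m j)⁻¹ • w)

lemma dvec_apply_ne {i j k : Fin N} (hki : k ≠ i) (hkj : k ≠ j)
    (w : EuclideanSpace ℝ (Fin ν)) : dvec m i j w k = 0 := by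
  simp [dvec, Pi.single_apply, hki, hkj]

lemma dvec_apply_left {i j : Fin N} (hij : i ≠ j) (w : EuclideanSpace ℝ (Fin ν)) :
    dvec m i j w i = (m i)⁻¹ • w := by
  simp [dvec, Pi.single_apply, hij]

lemma dvec_apply_right {i j : Fin N} (hij : i ≠ j) (w : EuclideanSpace ℝ (Fin ν)) :
    dvec m i j w j = -((m j)⁻¹ • w) := by
  simp [dvec, Pi.single_apply, (Ne.symm hij)]

lemma dvec_self (i : Fin N) (w : EuclideanSpace ℝ (Fin ν)) :
    dvec m i i w = 0 := by
  simp [dvec]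

lemma dvec_add (i j k : Fin N) (w : EuclideanSpace ℝ (Fin ν)) :
    dvec m i j w + dvec m j k w = dvec m i k w := by
  simp only [dvec]
  abel

lemma dvec_mem_baseSpace (hm : ∀ l, 0 < m l) {i j : Fin N} (hij : i ≠ j)
    (w : EuclideanSpace ℝ (Fin ν)) : dvec m i j w ∈ baseSpace N ν m i j := by
  rw [mem_baseSpace_iff]
  refine ⟨fun k hki hkj => dvec_apply_ne hki hkj w, ?_⟩
  rw [dvec_apply_left hij, dvec_apply_right hij, smul_neg, smul_smul, smul_smul,
    mul_inv_cancel₀ (hm i).ne', mul_inv_cancel₀ (hm j).ne', one_smul, add_neg_cancel]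

lemma baseSpace_le_massZ (hm : ∀ l, 0 < m l) {i j : Fin N} (hij : i ≠ j) :
    baseSpace N ν m i j ≤ massZ N ν m := by
  intro v hv
  rw [mem_baseSpace_iff] at hv
  rw [mem_massZ_iff, sum_smul_eq_pair m hij hv.1]
  exact hv.2

lemma dvec_mem_sup (hm : ∀ l, 0 < m l) {G : SimpleGraph (Fin N)} {i j : Fin N}
    (h : G.Reachable i j) (w : EuclideanSpace ℝ (Fin ν)) :
    dvec m i j w ∈ ⨆ p ∈ {p : Fin N × Fin N | G.Adj p.1 p.2}, baseSpace N ν m p.1 p.2 := by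
  obtain ⟨p⟩ := h
  induction p with
  | nil => rw [dvec_self]; exact Submodule.zero_mem _
  | @cons a b c hab q ih =>
    rw [← dvec_add a b c]
    refine Submodule.add_mem _ ?_ ih
    have hle : baseSpace N ν m a b ≤
        ⨆ p ∈ {p : Fin N × Fin N | G.Adj p.1 p.2}, baseSpace N ν m p.1 p.2 :=
      le_iSup₂ (f := fun (p : Fin N × Fin N)
        (_ : p ∈ {p : Fin N × Fin N | G.Adj p.1 p.2}) => baseSpace N ν m p.1 p.2) (a, b) hab
    exact hle (dvec_mem_baseSpace hm hab.ne w)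

lemma eq_sum_dvec (hm : ∀ l, 0 < m l) (i0 : Fin N)
    {v : Fin N → EuclideanSpace ℝ (Fin ν)} (hv : ∑ l, m l • v l = 0) :
    v = ∑ j, dvec m j i0 (m j • v j) := by
  funext k
  rw [Finset.sum_apply]
  simp only [dvec, Pi.sub_apply, Pi.single_apply]
  rw [Finset.sum_sub_distrib]
  have h1 : ∑ j : Fin N, (if k = j then (m j)⁻¹ • (m j • v j) else 0) = v k := by
    rw [Finset.sum_ite_eq]
    simp [smul_smul, inv_mul_cancel₀ (hm k).ne']
  have h2 : ∑ j : Fin N, (if k = i0 then (m i0)⁻¹ • (m j • v j) else 0) = 0 := by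
    by_cases hk : k = i0
    · simp only [hk, if_true, ← Finset.smul_sum, hv, smul_zero]
    · simp [hk]
  rw [h1, h2, sub_zero]

end Aux

/-- The base spaces `L_{i,j}` over the edge set of a graph `G` span the whole velocity
space `𝓩` if and only if `G` is connected. -/
theorem span_baseSpaces_eq_massZ_iff_connected
    {N ν : ℕ} (hN : 2 ≤ N) (hν : 2 ≤ ν) (m : Fin N → ℝ) (hm : ∀ l, 0 < m l)
    (G : SimpleGraph (Fin N)) :
    (⨆ p ∈ {p : Fin N × Fin N | G.Adj p.1 p.2}, baseSpace N ν m p.1 p.2)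
        = massZ N ν m ↔ G.Connected := by
  classical
  constructor
  · intro h
    rw [SimpleGraph.connected_iff]
    refine ⟨fun i0 j0 => ?_, ⟨⟨0, by omega⟩⟩⟩
    by_contra hn
    set f : (Fin N → EuclideanSpace ℝ (Fin ν)) →ₗ[ℝ] EuclideanSpace ℝ (Fin ν) :=
      ∑ k, (if G.Reachable i0 k then m k else 0) • LinearMap.proj k with hf
    have hfapp : ∀ v : Fin N → EuclideanSpace ℝ (Fin ν),
        f v = ∑ k, (if G.Reachable i0 k then m k else 0) • v k := by
      intro v
      simp only [hf, LinearMap.sum_apply]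
      refine Finset.sum_congr rfl fun k _ => ?_
      by_cases hk : G.Reachable i0 k <;> simp [hk]
    have hTf : (⨆ p ∈ {p : Fin N × Fin N | G.Adj p.1 p.2}, baseSpace N ν m p.1 p.2)
        ≤ LinearMap.ker f := by
      refine iSup₂_le ?_
      rintro ⟨i, j⟩ hadj v hv
      have hadj' : G.Adj i j := hadj
      rw [mem_baseSpace_iff] at hv
      rw [LinearMap.mem_ker, hfapp, sum_smul_eq_pair _ hadj'.ne hv.1]
      by_cases hr : G.Reachable i0 i
      · have hrj : G.Reachable i0 j := hr.trans hadj'.reachable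
        simpa [hr, hrj] using hv.2
      · have hrj : ¬ G.Reachable i0 j := fun h' => hr (h'.trans hadj'.symm.reachable)
        simp [hr, hrj]
    have hij : i0 ≠ j0 := fun e => hn (e ▸ SimpleGraph.Reachable.refl i0)
    set w : EuclideanSpace ℝ (Fin ν) := EuclideanSpace.single ⟨0, by omega⟩ (1 : ℝ) with hwdef
    have hw : w ≠ 0 := by
      intro h0
      have h1 : w ⟨0, by omega⟩ = 1 := by
        rw [hwdef, EuclideanSpace.single_apply]
        simp
      rw [h0] at h1
      exact one_ne_zero h1.symm
    have hmem : dvec m i0 j0 w ∈ massZ N ν m :=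
      baseSpace_le_massZ hm hij (dvec_mem_baseSpace hm hij w)
    rw [← h] at hmem
    have hker := hTf hmem
    rw [LinearMap.mem_ker, hfapp,
      sum_smul_eq_pair _ hij (fun k hki hkj => dvec_apply_ne hki hkj w)] at hker
    have hri : G.Reachable i0 i0 := SimpleGraph.Reachable.refl i0
    rw [if_pos hri, if_neg hn, dvec_apply_left hij, zero_smul, add_zero, smul_smul,
      mul_inv_cancel₀ (hm i0).ne', one_smul] at hker
    exact hw hker
  · intro hG
    refine le_antisymm (iSup₂_le fun p hp => baseSpace_le_massZ hm ?_) ?_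
    · exact (hp : G.Adj p.1 p.2).ne
    · intro v hv
      rw [mem_massZ_iff] at hv
      have i0 : Fin N := ⟨0, by omega⟩
      rw [eq_sum_dvec hm i0 hv]
      exact Submodule.sum_mem _ fun j _ => dvec_mem_sup hm (hG.preconnected j i0) _
end

section
/- If the collision graph G on {1,…,N} with edge set I is a tree (connected and with N−1 edges), then the velocity space 𝓩 = {v ∈ (ℝ^ν)^N : Σ mᵢvᵢ = 0} is the internal direct sum of the subspaces L_{i,j}, (i,j) ∈ I: these subspaces span 𝓩 and the sum of their dimensions, (N−1)ν, equals dim 𝓩. -/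
lemma mem_massZ {N ν : ℕ} (m : Fin N → ℝ) (v : Fin N → EuclideanSpace ℝ (Fin ν)) :
    v ∈ massZ N ν m ↔ ∑ l, m l • v l = 0 := by
  simp [massZ, LinearMap.mem_ker, LinearMap.sum_apply]

lemma mem_baseSpace {N ν : ℕ} (m : Fin N → ℝ) (i j : Fin N)
    (v : Fin N → EuclideanSpace ℝ (Fin ν)) :
    v ∈ baseSpace N ν m i j ↔
      (∀ k, k ≠ i → k ≠ j → v k = 0) ∧ m i • v i + m j • v j = 0 := by
  simp [baseSpace, Submodule.mem_inf, Submodule.mem_iInf, LinearMap.mem_ker, not_or]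

noncomputable def pairVec {N ν : ℕ} (m : Fin N → ℝ) (i j : Fin N)
    (w : EuclideanSpace ℝ (Fin ν)) : Fin N → EuclideanSpace ℝ (Fin ν) :=
  fun k => if k = i then w else if k = j then -((m i / m j) • w) else 0

lemma pairVec_mem {N ν : ℕ} (m : Fin N → ℝ) (hm : ∀ l, 0 < m l) {i j : Fin N} (hij : i ≠ j)
    (w : EuclideanSpace ℝ (Fin ν)) : pairVec m i j w ∈ baseSpace N ν m i j := by
  rw [mem_baseSpace]
  refine ⟨fun k hki hkj => by simp [pairVec, hki, hkj], ?_⟩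
  have h1 : pairVec m i j w i = w := by simp [pairVec]
  have h2 : pairVec m i j w j = -((m i / m j) • w) := by simp [pairVec, Ne.symm hij]
  rw [h1, h2, smul_neg, smul_smul]
  rw [mul_div_assoc', mul_div_cancel_left₀ _ (hm j).ne']
  abel

lemma basf_self {N ν : ℕ} (m : Fin N → ℝ) (hm : ∀ l, 0 < m l) {i : Fin N}
    {v : Fin N → EuclideanSpace ℝ (Fin ν)}
    (h2 : m i • v i + m i • v i = 0) : v i = 0 := by
  have h : (m i + m i) • v i = 0 := by rw [add_smul]; exact h2
  have hne : m i + m i ≠ 0 := by have := hm i; nlinarith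
  exact (smul_eq_zero.1 h).resolve_left hne

lemma walk_le {N ν : ℕ} (m : Fin N → ℝ) (hm : ∀ l, 0 < m l)
    (G : SimpleGraph (Fin N)) {i j : Fin N} (p : G.Walk i j) :
    baseSpace N ν m i j ≤
      ⨆ q ∈ {q : Fin N × Fin N | G.Adj q.1 q.2}, baseSpace N ν m q.1 q.2 := by
  induction p with
  | nil =>
    rename_i a
    intro v hv
    rw [mem_baseSpace] at hv
    have hva : v a = 0 := basf_self m hm hv.2
    have : v = 0 := by
      funext l
      by_cases hl : l = a
      · subst hl; exact hva
      · exact hv.1 l hl hl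
    rw [this]; exact Submodule.zero_mem _
  | @cons a b c h p ih =>
    intro v hv
    rw [mem_baseSpace] at hv
    obtain ⟨hv1, hv2⟩ := hv
    have hab : a ≠ b := h.ne
    set u := pairVec m a b (v a) with hu
    have hu_mem : u ∈ ⨆ q ∈ {q : Fin N × Fin N | G.Adj q.1 q.2}, baseSpace N ν m q.1 q.2 :=
      (le_iSup₂ (f := fun q (_ : q ∈ {q : Fin N × Fin N | G.Adj q.1 q.2}) =>
        baseSpace N ν m q.1 q.2) (a, b) h) (pairVec_mem m hm hab (v a))
    have hua : u a = v a := by simp [hu, pairVec]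
    have hub : u b = -((m a / m b) • v a) := by simp [hu, pairVec, Ne.symm hab]
    have hw_mem : v - u ∈ baseSpace N ν m b c := by
      rw [mem_baseSpace]
      constructor
      · intro l hlb hlc
        by_cases hla : l = a
        · subst hla
          simp [hua]
        · have : v l = 0 := hv1 l hla hlc
          simp [this, hu, pairVec, hla, hlb]
      · by_cases hbc : b = c
        · subst hbc
          have hvb : v b = -((m a / m b) • v a) := by
            have h3 : m b • v b = -(m a • v a) := by
              rw [eq_neg_iff_add_eq_zero, add_comm]; exact hv2
            have h4 := congrArg (fun x => (m b)⁻¹ • x) h3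
            simp only [smul_smul, smul_neg] at h4
            rw [inv_mul_cancel₀ (hm b).ne'] at h4
            simpa [div_eq_inv_mul, smul_smul] using h4
          have : (v - u) b = 0 := by rw [Pi.sub_apply, hvb, hub]; simp
          rw [this]; simp
        · have hvb : v b = 0 := hv1 b (Ne.symm hab) hbc
          by_cases hca : c = a
          · rw [hca] at hv2
            have hva : v a = 0 := basf_self m hm hv2
            rw [hca, Pi.sub_apply, Pi.sub_apply, hvb, hub, hua, hva]
            simp
          · have huc : u c = 0 := by simp [hu, pairVec, hca, Ne.symm hbc]
            rw [Pi.sub_apply, Pi.sub_apply, hvb, hub, huc, sub_zero, zero_sub]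
            simp only [smul_neg, neg_neg, smul_smul]
            rw [mul_div_assoc', mul_div_cancel_left₀ _ (hm b).ne']
            exact hv2
    have hsum : v = u + (v - u) := by abel
    rw [hsum]
    exact Submodule.add_mem _ hu_mem (ih hw_mem)

/-- If the collision graph is a tree (connected with `N − 1` edges), then the base spaces
`L_{i,j}` over its edges span `𝓩` and the sum of their dimensions, `(N−1)ν`, equals
`dim 𝓩`; i.e. `𝓩` is their internal direct sum. -/
theorem tree_gives_direct_sum
    {N ν : ℕ} (hN : 2 ≤ N) (hν : 2 ≤ ν) (m : Fin N → ℝ) (hm : ∀ l, 0 < m l)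
    (G : SimpleGraph (Fin N)) [DecidableRel G.Adj]
    (hconn : G.Connected) (hcard : G.edgeFinset.card = N - 1) :
    (⨆ p ∈ {p : Fin N × Fin N | G.Adj p.1 p.2}, baseSpace N ν m p.1 p.2)
        = massZ N ν m ∧
    (N - 1) * ν = Module.finrank ℝ ↥(massZ N ν m) := by
  have hNpos : 0 < N := by omega
  set i0 : Fin N := ⟨0, hNpos⟩ with hi0
  constructor
  · apply le_antisymm
    · -- each baseSpace over an edge is contained in massZ
      refine iSup₂_le fun p hp => ?_
      intro v hv
      rw [mem_baseSpace] at hv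
      rw [mem_massZ]
      have hne : p.1 ≠ p.2 := hp.ne
      rw [Finset.sum_eq_add_of_mem p.1 p.2 (Finset.mem_univ _) (Finset.mem_univ _) hne
        (fun k _ hk => by rw [hv.1 k (by tauto) (by tauto)]; simp)]
      exact hv.2
    · -- massZ is contained in the supremum
      intro v hv
      rw [mem_massZ] at hv
      have hdecomp : v = ∑ i ∈ Finset.univ.erase i0, pairVec m i i0 (v i) := by
        funext l
        rw [Finset.sum_apply]
        by_cases hl : l = i0
        · subst hl
          have : ∀ i ∈ Finset.univ.erase i0, pairVec m i i0 (v i) i0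
              = -((m i / m i0) • v i) := by
            intro i hi
            have : i0 ≠ i := (Finset.mem_erase.1 hi).1.symm
            simp [pairVec, this]
          rw [Finset.sum_congr rfl this]
          have hsplit : m i0 • v i0 + ∑ i ∈ Finset.univ.erase i0, m i • v i = 0 := by
            rw [← Finset.add_sum_erase _ _ (Finset.mem_univ i0)] at hv
            exact hv
          have hsum : ∑ i ∈ Finset.univ.erase i0, m i • v i = -(m i0 • v i0) := by
            linear_combination (norm := module) hsplit
          symm
          calc ∑ i ∈ Finset.univ.erase i0, -((m i / m i0) • v i)
              = -((m i0)⁻¹ • ∑ i ∈ Finset.univ.erase i0, m i • v i) := by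
                rw [Finset.smul_sum, ← Finset.sum_neg_distrib]
                refine Finset.sum_congr rfl fun i _ => ?_
                rw [smul_smul, div_eq_inv_mul]
            _ = v i0 := by
                rw [hsum, smul_neg, neg_neg, smul_smul, inv_mul_cancel₀ (hm i0).ne', one_smul]
        · have : ∀ i ∈ Finset.univ.erase i0, pairVec m i i0 (v i) l
              = if l = i then v l else 0 := by
            intro i hi
            by_cases hli : l = i
            · subst hli; simp [pairVec]
            · simp [pairVec, hli, hl]
          rw [Finset.sum_congr rfl this, Finset.sum_ite_eq _ l]
          simp [Finset.mem_erase, hl]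
      rw [hdecomp]
      refine Submodule.sum_mem _ fun i hi => ?_
      have hne : i ≠ i0 := (Finset.mem_erase.1 hi).1
      exact walk_le m hm G (hconn i i0).some (pairVec_mem m hm hne (v i))
  · -- dimension count
    set f : (Fin N → EuclideanSpace ℝ (Fin ν)) →ₗ[ℝ] EuclideanSpace ℝ (Fin ν) :=
      ∑ l : Fin N, m l •
        (LinearMap.proj l : (Fin N → EuclideanSpace ℝ (Fin ν)) →ₗ[ℝ] EuclideanSpace ℝ (Fin ν))
      with hf
    have hsurj : Function.Surjective f := by
      intro x
      refine ⟨fun k => if k = i0 then (m i0)⁻¹ • x else 0, ?_⟩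
      have : f (fun k => if k = i0 then (m i0)⁻¹ • x else 0)
          = ∑ l : Fin N, m l • (if l = i0 then (m i0)⁻¹ • x else 0) := by
        simp [hf, LinearMap.sum_apply]
      rw [this, Finset.sum_eq_single i0]
      · rw [if_pos rfl, smul_smul, mul_inv_cancel₀ (hm i0).ne', one_smul]
      · intro b _ hb; rw [if_neg hb, smul_zero]
      · intro h; exact absurd (Finset.mem_univ i0) h
    have hrank := LinearMap.finrank_range_add_finrank_ker f
    have hrange : LinearMap.range f = ⊤ := LinearMap.range_eq_top.2 hsurj
    rw [hrange, finrank_top] at hrank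
    have hdom : Module.finrank ℝ (Fin N → EuclideanSpace ℝ (Fin ν)) = N * ν := by
      rw [Module.finrank_pi_fintype]
      simp [finrank_euclideanSpace_fin]
    have hcodom : Module.finrank ℝ (EuclideanSpace ℝ (Fin ν)) = ν := finrank_euclideanSpace_fin
    rw [hdom, hcodom] at hrank
    have hmass : massZ N ν m = LinearMap.ker f := rfl
    rw [hmass]
    obtain ⟨M, rfl⟩ : ∃ M, N = M + 1 := ⟨N - 1, by omega⟩
    have hNm : (M + 1) * ν = M * ν + ν := by ring
    rw [hNm] at hrank
    simp only [Nat.add_sub_cancel]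
    omega
end
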